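/- arXiv:2602.24268 — 6 statements merged into one kernel-verified Lean document; each statement's English description precedes it below -/
import Mathlib

section
/- Suppose at time t: R(t) ∈ SO(3) with bᵢ = R(t) eᵢ, Ṙ(t) = R(t) Ω̂, v̇(t) = (f/m) b₃ − g e₃, the constraints p̂ = −b₁, v₂ = ρ Ω₃, v₃ = −ρ Ω₂ hold (where ρ = ‖p(t)‖ > 0, vᵢ = bᵢ ⋅ v(t), Ωᵢ = eᵢ ⋅ Ω). Then the function t' ↦ b₂(t') ⋅ v(t') is differentiable at t with derivative −v₁ Ω₃ − ρ Ω₂ Ω₁ − g s₂, and the function t' ↦ b₃(t') ⋅ v(t') is differentiable at t with derivative v₁ Ω₂ − ρ Ω₃ Ω₁ + f/m − g s₃, where s₂ = e₃ ⋅ b₂ and s₃ = e₃ ⋅ b₃. -/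
open Matrix

/-- Standard basis vectors of `ℝ³ = Fin 3 → ℝ` (so `e 0 = e₁`, `e 1 = e₂`, `e 2 = e₃`). -/
def e (i : Fin 3) : Fin 3 → ℝ := Pi.single i 1

/-- `SO(3)`: real 3×3 matrices with `RᵀR = I` and `det R = 1`. -/
def SO3 (R : Matrix (Fin 3) (Fin 3) ℝ) : Prop := Rᵀ * R = 1 ∧ R.det = 1

/-- The Euclidean norm on `ℝ³ = Fin 3 → ℝ`. -/
noncomputable def enorm3 (x : Fin 3 → ℝ) : ℝ := Real.sqrt (x ⬝ᵥ x)

/-- The hat map: `hat Ω` is the skew-symmetric matrix with `(hat Ω) y = Ω × y`. -/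
def hat (Ω : Fin 3 → ℝ) : Matrix (Fin 3) (Fin 3) ℝ :=
  !![0, -Ω 2, Ω 1; Ω 2, 0, -Ω 0; -Ω 1, Ω 0, 0]

attribute [local instance] Matrix.normedAddCommGroup Matrix.normedSpace

/-- On-manifold derivatives of the body-frame velocity components `v₂ = b₂ ⋅ v` and
`v₃ = b₃ ⋅ v`: under `Ṙ = R Ω̂`, `v̇ = (f/m) b₃ − g e₃` and the constraints
`p̂ = −b₁`, `v₂ = ρ Ω₃`, `v₃ = −ρ Ω₂`, one has
`d/dt (b₂ ⋅ v) = −v₁ Ω₃ − ρ Ω₂ Ω₁ − g s₂` and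
`d/dt (b₃ ⋅ v) = v₁ Ω₂ − ρ Ω₃ Ω₁ + f/m − g s₃`. -/
theorem vdot_components (m g f : ℝ) (hm : 0 < m) (hg : 0 < g)
    (R : ℝ → Matrix (Fin 3) (Fin 3) ℝ) (p v : ℝ → Fin 3 → ℝ) (Ω : Fin 3 → ℝ) (t : ℝ)
    (hSO : SO3 (R t))
    (hR : HasDerivAt R (R t * hat Ω) t)
    (hp : HasDerivAt p (v t) t)
    (hv : HasDerivAt v ((f / m) • (R t *ᵥ e 2) - g • e 2) t)
    (hρ : 0 < enorm3 (p t))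
    (hpoint : (enorm3 (p t))⁻¹ • p t = -(R t *ᵥ e 0))
    (hc2 : (R t *ᵥ e 1) ⬝ᵥ v t = enorm3 (p t) * (e 2 ⬝ᵥ Ω))
    (hc3 : (R t *ᵥ e 2) ⬝ᵥ v t = -(enorm3 (p t) * (e 1 ⬝ᵥ Ω))) :
    HasDerivAt (fun s => (R s *ᵥ e 1) ⬝ᵥ v s)
      (-(((R t *ᵥ e 0) ⬝ᵥ v t) * (e 2 ⬝ᵥ Ω)) -
        enorm3 (p t) * (e 1 ⬝ᵥ Ω) * (e 0 ⬝ᵥ Ω) - g * (e 2 ⬝ᵥ (R t *ᵥ e 1))) t ∧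
    HasDerivAt (fun s => (R s *ᵥ e 2) ⬝ᵥ v s)
      (((R t *ᵥ e 0) ⬝ᵥ v t) * (e 1 ⬝ᵥ Ω) -
        enorm3 (p t) * (e 2 ⬝ᵥ Ω) * (e 0 ⬝ᵥ Ω) + f / m - g * (e 2 ⬝ᵥ (R t *ᵥ e 2))) t := by
  have hRij : ∀ i j, HasDerivAt (fun s => R s i j) ((R t * hat Ω) i j) t := by
    intro i j
    exact (hasDerivAt_pi.mp ((hasDerivAt_pi.mp hR) i)) j
  have hvi : ∀ i, HasDerivAt (fun s => v s i) (((f / m) • (R t *ᵥ e 2) - g • e 2) i) t :=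
    fun i => (hasDerivAt_pi.mp hv) i
  have key : ∀ j : Fin 3, HasDerivAt (fun s => (R s *ᵥ e j) ⬝ᵥ v s)
      (∑ i, ((R t * hat Ω) i j * v t i + R t i j * ((f / m) • (R t *ᵥ e 2) - g • e 2) i)) t := by
    intro j
    have he : (fun s => (R s *ᵥ e j) ⬝ᵥ v s) = fun s => ∑ i, R s i j * v s i := by
      funext s
      simp [e, Matrix.mulVec_single, dotProduct]
    rw [he]
    exact HasDerivAt.fun_sum fun i _ => (hRij i j).mul (hvi i)
  have horth : ∀ a b : Fin 3, (∑ k, R t k a * R t k b) = if a = b then 1 else 0 := by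
    intro a b
    have := congrFun (congrFun hSO.1 a) b
    simpa [Matrix.mul_apply, Matrix.transpose_apply, Matrix.one_apply] using this
  have h12 := horth 1 2
  have h22 := horth 2 2
  simp only [Fin.sum_univ_three] at h12 h22
  simp only [Fin.reduceEq, reduceIte] at h12 h22
  simp only [e, Matrix.mulVec_single, dotProduct, Fin.sum_univ_three, Pi.single_apply, Fin.reduceEq, reduceIte, Fin.reduceEq, reduceIte,
    mul_one] at hc2 hc3 ⊢
  norm_num at hc2 hc3 ⊢
  constructor
  · have := key 1
    simp only [e, Matrix.mulVec_single, dotProduct, Fin.sum_univ_three, Matrix.mul_apply,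
      hat, Pi.smul_apply, Pi.sub_apply, Pi.single_apply, Matrix.cons_val', Matrix.cons_val_zero,
      Matrix.cons_val_one, Matrix.head_cons, Matrix.empty_val', Matrix.cons_val_fin_one,
      Matrix.head_fin_const, smul_eq_mul, mul_one, Fin.reduceEq, reduceIte, Matrix.of_apply, Matrix.cons_val] at this
    norm_num at this
    convert this using 1
    linear_combination (-(Ω 0)) * hc3 - (f / m) * h12
  · have := key 2
    simp only [e, Matrix.mulVec_single, dotProduct, Fin.sum_univ_three, Matrix.mul_apply,
      hat, Pi.smul_apply, Pi.sub_apply, Pi.single_apply, Matrix.cons_val', Matrix.cons_val_zero,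
      Matrix.cons_val_one, Matrix.head_cons, Matrix.empty_val', Matrix.cons_val_fin_one,
      Matrix.head_fin_const, smul_eq_mul, mul_one, Fin.reduceEq, reduceIte, Matrix.of_apply, Matrix.cons_val] at this
    norm_num at this
    convert this using 1
    linear_combination (Ω 0) * hc2 - (f / m) * h22
end

section
/- Suppose at time t: R(t) ∈ SO(3) with bᵢ = R(t) eᵢ, Ṙ(t) = R(t) Ω̂, ṗ(t) = v(t), v̇(t) = (f/m) b₃ − g e₃, and the constraints p̂ = −b₁, v₂ = ρ Ω₃, v₃ = −ρ Ω₂ hold at t (ρ = ‖p(t)‖ > 0). Then the function t' ↦ (b₂(t') ⋅ v(t'))/‖p(t')‖ is differentiable at t with derivative −Ω₁ Ω₂ − (g/ρ) s₂, and the function t' ↦ −(b₃(t') ⋅ v(t'))/‖p(t')‖ is differentiable at t with derivative Ω₁ Ω₃ + (1/ρ)(−f/m + g s₃), where s₂ = e₃ ⋅ b₂, s₃ = e₃ ⋅ b₃, Ωᵢ = eᵢ ⋅ Ω, vᵢ = bᵢ ⋅ v(t). -/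
open Matrix

attribute [local instance] Matrix.normedAddCommGroup Matrix.normedSpace

/-- On-manifold required angular accelerations: under `Ṙ = R Ω̂`, `ṗ = v`,
`v̇ = (f/m) b₃ − g e₃` and the constraints `p̂ = −b₁`, `v₂ = ρ Ω₃`, `v₃ = −ρ Ω₂`,
`d/dt (v₂/ρ) = −Ω₁ Ω₂ − (g/ρ) s₂` and `d/dt (−v₃/ρ) = Ω₁ Ω₃ + (1/ρ)(−f/m + g s₃)`. -/
theorem required_angular_accelerations (m g f : ℝ) (hm : 0 < m) (hg : 0 < g)
    (R : ℝ → Matrix (Fin 3) (Fin 3) ℝ) (p v : ℝ → Fin 3 → ℝ) (Ω : Fin 3 → ℝ) (t : ℝ)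
    (hSO : SO3 (R t))
    (hR : HasDerivAt R (R t * hat Ω) t)
    (hp : HasDerivAt p (v t) t)
    (hv : HasDerivAt v ((f / m) • (R t *ᵥ e 2) - g • e 2) t)
    (hρ : 0 < enorm3 (p t))
    (hpoint : (enorm3 (p t))⁻¹ • p t = -(R t *ᵥ e 0))
    (hc2 : (R t *ᵥ e 1) ⬝ᵥ v t = enorm3 (p t) * (e 2 ⬝ᵥ Ω))
    (hc3 : (R t *ᵥ e 2) ⬝ᵥ v t = -(enorm3 (p t) * (e 1 ⬝ᵥ Ω))) :
    HasDerivAt (fun s => ((R s *ᵥ e 1) ⬝ᵥ v s) / enorm3 (p s))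
      (-((e 0 ⬝ᵥ Ω) * (e 1 ⬝ᵥ Ω)) - (g / enorm3 (p t)) * (e 2 ⬝ᵥ (R t *ᵥ e 1))) t ∧
    HasDerivAt (fun s => -(((R s *ᵥ e 2) ⬝ᵥ v s) / enorm3 (p s)))
      ((e 0 ⬝ᵥ Ω) * (e 2 ⬝ᵥ Ω) +
        (1 / enorm3 (p t)) * (-(f / m) + g * (e 2 ⬝ᵥ (R t *ᵥ e 2)))) t := by
  obtain ⟨horth, -⟩ := hSO
  have hρ0 : enorm3 (p t) ≠ 0 := hρ.ne'
  have hm0 : m ≠ 0 := hm.ne'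
  set ρ := enorm3 (p t) with hρdef
  set C : ℝ := R t 0 0 * v t 0 + R t 1 0 * v t 1 + R t 2 0 * v t 2 with hC
  -- component derivatives
  have hRc : ∀ k j, HasDerivAt (fun s => R s k j) ((R t * hat Ω) k j) t :=
    fun k j => hasDerivAt_pi.1 (hasDerivAt_pi.1 hR k) j
  have hpc : ∀ k, HasDerivAt (fun s => p s k) (v t k) t := fun k => hasDerivAt_pi.1 hp k
  have hvc : ∀ k, HasDerivAt (fun s => v s k) (f / m * R t k 2 - g * e 2 k) t := by
    intro k
    have h := hasDerivAt_pi.1 hv k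
    refine h.congr_deriv ?_
    simp [Matrix.mulVec, dotProduct, e, Pi.single_apply, Fin.sum_univ_three]
  -- pointing constraint componentwise
  have hpk : ∀ k, p t k = -(ρ * R t k 0) := by
    intro k
    have h := congrFun hpoint k
    simp only [Pi.smul_apply, Pi.neg_apply, smul_eq_mul] at h
    have h2 : (R t *ᵥ e 0) k = R t k 0 := by
      simp [Matrix.mulVec, dotProduct, e, Pi.single_apply, Fin.sum_univ_three]
    rw [h2] at h
    field_simp at h
    linarith
  -- orthogonality relations
  have hO12 : R t 0 1 * R t 0 2 + R t 1 1 * R t 1 2 + R t 2 1 * R t 2 2 = 0 := by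
    have h := congrFun (congrFun horth 1) 2
    simpa [Matrix.mul_apply, Matrix.transpose_apply, Matrix.one_apply,
      Fin.sum_univ_three] using h
  have hO22 : R t 0 2 * R t 0 2 + R t 1 2 * R t 1 2 + R t 2 2 * R t 2 2 = 1 := by
    have h := congrFun (congrFun horth 2) 2
    simpa [Matrix.mul_apply, Matrix.transpose_apply, Matrix.one_apply,
      Fin.sum_univ_three] using h
  -- constraints expanded
  have hA : R t 0 1 * v t 0 + R t 1 1 * v t 1 + R t 2 1 * v t 2 = ρ * Ω 2 := by
    have h := hc2
    simpa [Matrix.mulVec, dotProduct, e, Pi.single_apply, Fin.sum_univ_three] using h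
  have hB : R t 0 2 * v t 0 + R t 1 2 * v t 1 + R t 2 2 * v t 2 = -(ρ * Ω 1) := by
    have h := hc3
    simpa [Matrix.mulVec, dotProduct, e, Pi.single_apply, Fin.sum_univ_three] using h
  -- derivative of the norm
  have hsq : 0 < p t ⬝ᵥ p t := Real.sqrt_pos.mp hρ
  have hdot : HasDerivAt (fun s => p s ⬝ᵥ p s) (∑ k, (v t k * p t k + p t k * v t k)) t := by
    have h := HasDerivAt.sum (fun k (_ : k ∈ Finset.univ) => (hpc k).mul (hpc k))
    have he : (fun s => p s ⬝ᵥ p s) = fun s => ∑ k, p s k * p s k := by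
      funext s; rfl
    rw [he]; exact h
  have hρd : HasDerivAt (fun s => enorm3 (p s)) (-C) t := by
    have h := (Real.hasDerivAt_sqrt hsq.ne').comp t hdot
    have he : (fun s => enorm3 (p s)) = Real.sqrt ∘ (fun s => p s ⬝ᵥ p s) := rfl
    rw [he]
    refine h.congr_deriv ?_
    have hsqrt : Real.sqrt (p t ⬝ᵥ p t) = ρ := rfl
    rw [hsqrt, Fin.sum_univ_three, hpk 0, hpk 1, hpk 2, hC]
    field_simp
    ring
  -- numerator derivatives
  have hNum : ∀ i : Fin 3, HasDerivAt (fun s => (R s *ᵥ e i) ⬝ᵥ v s)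
      (∑ k, ((R t * hat Ω) k i * v t k + R t k i * (f / m * R t k 2 - g * e 2 k))) t := by
    intro i
    have h := HasDerivAt.sum (fun k (_ : k ∈ Finset.univ) => (hRc k i).mul (hvc k))
    have he : (fun s => (R s *ᵥ e i) ⬝ᵥ v s) = fun s => ∑ k, R s k i * v s k := by
      funext s
      simp [Matrix.mulVec, dotProduct, e, Pi.single_apply, Fin.sum_univ_three]
    rw [he]; exact h
  have hN1 : HasDerivAt (fun s => (R s *ᵥ e 1) ⬝ᵥ v s)
      (-(Ω 2) * C - Ω 0 * (ρ * Ω 1) - g * R t 2 1) t := by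
    convert hNum 1 using 1
    simp only [Matrix.mul_apply, hat, Fin.sum_univ_three, e, Pi.single_apply,
      Matrix.cons_val_zero, Matrix.cons_val_one, Matrix.head_cons,
      Matrix.empty_val', Matrix.cons_val_fin_one, Matrix.head_fin_const,
      Matrix.cons_val_two, Matrix.tail_cons, Matrix.cons_val, Matrix.of_apply]
    norm_num [Fin.ext_iff, Matrix.cons_val]
    linear_combination (-(Ω 0)) * hB - f / m * hO12
  have hN2 : HasDerivAt (fun s => (R s *ᵥ e 2) ⬝ᵥ v s)
      (Ω 1 * C - Ω 0 * (ρ * Ω 2) + f / m - g * R t 2 2) t := by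
    convert hNum 2 using 1
    simp only [Matrix.mul_apply, hat, Fin.sum_univ_three, e, Pi.single_apply,
      Matrix.cons_val_zero, Matrix.cons_val_one, Matrix.head_cons,
      Matrix.empty_val', Matrix.cons_val_fin_one, Matrix.head_fin_const,
      Matrix.cons_val_two, Matrix.tail_cons, Matrix.cons_val, Matrix.of_apply]
    norm_num [Fin.ext_iff, Matrix.cons_val]
    linear_combination Ω 0 * hA - f / m * hO22
  have hq1 := hN1.div hρd hρ0
  have hq2 := (hN2.div hρd hρ0).neg
  have hd2 : e 2 ⬝ᵥ (R t *ᵥ e 1) = R t 2 1 := by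
    simp [Matrix.mulVec, dotProduct, e, Pi.single_apply, Fin.sum_univ_three]
  have hd3 : e 2 ⬝ᵥ (R t *ᵥ e 2) = R t 2 2 := by
    simp [Matrix.mulVec, dotProduct, e, Pi.single_apply, Fin.sum_univ_three]
  have hΩ : ∀ i, e i ⬝ᵥ Ω = Ω i := by
    intro i; simp [dotProduct, e, Pi.single_apply, Fin.sum_univ_three]
  constructor
  · refine hq1.congr_deriv ?_
    rw [hΩ 0, hΩ 1, hd2, hc2, hΩ 2, ← hρdef]
    field_simp
    ring
  · refine hq2.congr_deriv ?_
    rw [hΩ 0, hΩ 2, hd3, hc3, hΩ 1, ← hρdef]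
    field_simp
    ring
end

section
/- Let m, g, J₁, J₂, J₃, ρ > 0, R ∈ SO(3) with bᵢ = R eᵢ, and define the three constraint covectors on (Ω, v) ∈ ℝ³ × ℝ³ by μ¹(Ω,v) = e₃ ⋅ v, μ²(Ω,v) = e₃ ⋅ Ω − (1/ρ)(b₂ ⋅ v), μ³(Ω,v) = e₂ ⋅ Ω + (1/ρ)(b₃ ⋅ v), and the control directions a_f = (0, (1/m) R e₃), a_{τ₂} = ((1/J₂) e₂, 0), a_{τ₃} = ((1/J₃) e₃, 0). Then the 3×3 matrix M with entries M_{a,j} = μᵃ(c_j) for (c₁, c₂, c₃) = (a_f, a_{τ₂}, a_{τ₃}) has determinant −(e₃ᵀ R e₃)/(m J₂ J₃); in particular M is invertible if and only if e₃ᵀ R e₃ ≠ 0. -/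
open Matrix

/-- Transversality as a determinant: the matrix `M` with entries `Mₐⱼ = μᵃ(cⱼ)`,
where `μ¹,μ²,μ³` are the altitude/pointing constraint covectors and
`(c₁,c₂,c₃) = (a_f, a_{τ₂}, a_{τ₃})` the control directions, satisfies
`det M = −(e₃ᵀ R e₃)/(m J₂ J₃)`; in particular `M` is invertible iff `e₃ᵀ R e₃ ≠ 0`. -/
theorem transversality_det (m g J₁ J₂ J₃ ρ : ℝ)
    (hm : 0 < m) (hg : 0 < g) (hJ₁ : 0 < J₁) (hJ₂ : 0 < J₂) (hJ₃ : 0 < J₃) (hρ : 0 < ρ)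
    (R : Matrix (Fin 3) (Fin 3) ℝ) (hR : SO3 R) :
    let μ : Fin 3 → (Fin 3 → ℝ) × (Fin 3 → ℝ) → ℝ :=
      ![fun ξ => e 2 ⬝ᵥ ξ.2,
        fun ξ => e 2 ⬝ᵥ ξ.1 - (1 / ρ) * ((R *ᵥ e 1) ⬝ᵥ ξ.2),
        fun ξ => e 1 ⬝ᵥ ξ.1 + (1 / ρ) * ((R *ᵥ e 2) ⬝ᵥ ξ.2)]
    let c : Fin 3 → (Fin 3 → ℝ) × (Fin 3 → ℝ) :=
      ![(0, (1 / m) • (R *ᵥ e 2)), ((1 / J₂) • e 1, 0), ((1 / J₃) • e 2, 0)]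
    let M : Matrix (Fin 3) (Fin 3) ℝ := Matrix.of fun a j => μ a (c j)
    M.det = -(e 2 ⬝ᵥ (R *ᵥ e 2)) / (m * J₂ * J₃) ∧
      (IsUnit M ↔ e 2 ⬝ᵥ (R *ᵥ e 2) ≠ 0) := by
  obtain ⟨hO, hdet⟩ := hR
  intro μ c M
  have key : ∀ i j : Fin 3, (R 0 i * R 0 j + R 1 i * R 1 j + R 2 i * R 2 j)
      = if i = j then (1:ℝ) else 0 := by
    intro i j
    have h := congrFun (congrFun hO i) j
    simpa [Matrix.mul_apply, Matrix.one_apply, Fin.sum_univ_three] using h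
  have k23 : R 0 1 * R 0 2 + R 1 1 * R 1 2 + R 2 1 * R 2 2 = 0 := by simpa using key 1 2
  have k33 : R 0 2 * R 0 2 + R 1 2 * R 1 2 + R 2 2 * R 2 2 = 1 := by simpa using key 2 2
  have hMeq : M = !![(1/m) * R 2 2, 0, 0; 0, 0, 1/J₃; 1/(ρ*m), 1/J₂, 0] := by
    ext a j
    fin_cases a <;> fin_cases j <;>
      simp [M, μ, c, e, dotProduct, Matrix.mulVec, Fin.sum_univ_three, Pi.single_apply]
    all_goals first
      | (right; linear_combination (1/m) * k23)
      | linear_combination (ρ⁻¹ * m⁻¹) * k33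
      | ring
  have hD : M.det = -(R 2 2) / (m * J₂ * J₃) := by
    rw [hMeq, Matrix.det_fin_three]
    norm_num
    change -(m⁻¹ * R 2 2 * J₃⁻¹ * J₂⁻¹) = -R 2 2 / (m * J₂ * J₃)
    ring
  have he : e 2 ⬝ᵥ (R *ᵥ e 2) = R 2 2 := by
    simp [e, dotProduct, Matrix.mulVec, Fin.sum_univ_three, Pi.single_apply]
  have hm' := hm.ne'
  have hJ₂' := hJ₂.ne'
  have hJ₃' := hJ₃.ne'
  refine ⟨by rw [hD, he], ?_⟩
  rw [Matrix.isUnit_iff_isUnit_det, isUnit_iff_ne_zero, hD, he]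
  constructor
  · intro h hc; apply h; rw [hc]; simp
  · intro h hc
    apply h
    field_simp at hc
    linarith
end

section
/- Let m, g, J₁, J₂, J₃, ρ > 0 and R ∈ SO(3) with bᵢ = R eᵢ, and suppose e₃ᵀ R e₃ = 0. Then the nonzero vector (Ω, v) = (e₂, −ρ b₃) ∈ ℝ³ × ℝ³ lies in the span of the control directions a_f = (0, (1/m) R e₃), a_{τ₂} = ((1/J₂) e₂, 0), a_{τ₃} = ((1/J₃) e₃, 0) (indeed (e₂, −ρ b₃) = J₂ a_{τ₂} − ρ m a_f), and it simultaneously annihilates all three constraint covectors: e₃ ⋅ v = 0, e₃ ⋅ Ω − (1/ρ)(b₂ ⋅ v) = 0, and e₂ ⋅ Ω + (1/ρ)(b₃ ⋅ v) = 0. Hence the transversality condition fails when e₃ᵀ R e₃ = 0. -/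
open Matrix

lemma col_dot (R : Matrix (Fin 3) (Fin 3) ℝ) (hR : Rᵀ * R = 1) (i j : Fin 3) :
    (R *ᵥ e i) ⬝ᵥ (R *ᵥ e j) = e i ⬝ᵥ e j := by
  have h : Rᵀ *ᵥ (R *ᵥ e i) = e i := by
    rw [Matrix.mulVec_mulVec, hR, Matrix.one_mulVec]
  rw [Matrix.dotProduct_mulVec, ← Matrix.mulVec_transpose, h]

lemma e_dot_12 : e 1 ⬝ᵥ (e 2 : Fin 3 → ℝ) = 0 := by
  simp [e, dotProduct, Fin.sum_univ_three, Pi.single_apply]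

lemma e_dot_21 : e 2 ⬝ᵥ (e 1 : Fin 3 → ℝ) = 0 := by
  simp [e, dotProduct, Fin.sum_univ_three, Pi.single_apply]

lemma e_dot_11 : e 1 ⬝ᵥ (e 1 : Fin 3 → ℝ) = 1 := by
  simp [e, dotProduct, Fin.sum_univ_three, Pi.single_apply]

lemma e_dot_22 : e 2 ⬝ᵥ (e 2 : Fin 3 → ℝ) = 1 := by
  simp [e, dotProduct, Fin.sum_univ_three, Pi.single_apply]

/-- When `e₃ᵀ R e₃ = 0`, the nonzero velocity `(Ω, v) = (e₂, −ρ b₃)` lies in the span of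
the control directions (indeed `(e₂, −ρ b₃) = J₂ a_{τ₂} − ρ m a_f`) and annihilates all
three constraint covectors `μ¹, μ², μ³`; hence transversality fails. -/
theorem transversality_fails (m g J₁ J₂ J₃ ρ : ℝ)
    (hm : 0 < m) (hg : 0 < g) (hJ₁ : 0 < J₁) (hJ₂ : 0 < J₂) (hJ₃ : 0 < J₃) (hρ : 0 < ρ)
    (R : Matrix (Fin 3) (Fin 3) ℝ) (hR : SO3 R)
    (hs : e 2 ⬝ᵥ (R *ᵥ e 2) = 0) :
    let Ω : Fin 3 → ℝ := e 1
    let v : Fin 3 → ℝ := -(ρ • (R *ᵥ e 2))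
    ((Ω, v) ≠ (0, 0)) ∧
    (Ω, v) = J₂ • (((1 / J₂) • e 1, (0 : Fin 3 → ℝ)) : (Fin 3 → ℝ) × (Fin 3 → ℝ)) -
        (ρ * m) • ((((0 : Fin 3 → ℝ)), (1 / m) • (R *ᵥ e 2)) : (Fin 3 → ℝ) × (Fin 3 → ℝ)) ∧
    e 2 ⬝ᵥ v = 0 ∧
    e 2 ⬝ᵥ Ω - (1 / ρ) * ((R *ᵥ e 1) ⬝ᵥ v) = 0 ∧
    e 1 ⬝ᵥ Ω + (1 / ρ) * ((R *ᵥ e 2) ⬝ᵥ v) = 0 := by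
  intro Ω v
  have h12 : (R *ᵥ e 1) ⬝ᵥ (R *ᵥ e 2) = 0 := by rw [col_dot R hR.1, e_dot_12]
  have h22 : (R *ᵥ e 2) ⬝ᵥ (R *ᵥ e 2) = 1 := by rw [col_dot R hR.1, e_dot_22]
  refine ⟨?_, ?_, ?_, ?_, ?_⟩
  · intro h
    exact one_ne_zero (congrFun (congrArg Prod.fst h) 1)
  · refine Prod.ext ?_ ?_
    · show Ω = J₂ • ((1 / J₂) • e 1) - (ρ * m) • (0 : Fin 3 → ℝ)
      simp [Ω, smul_smul, hJ₂.ne']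
    · show v = J₂ • (0 : Fin 3 → ℝ) - (ρ * m) • ((1 / m) • (R *ᵥ e 2))
      simp only [smul_zero, zero_sub, smul_smul, v]
      rw [show ρ * m * (1 / m) = ρ by field_simp]
  · show e 2 ⬝ᵥ (-(ρ • (R *ᵥ e 2))) = 0
    rw [dotProduct_neg, dotProduct_smul, hs]
    simp
  · have h1 : (R *ᵥ e 1) ⬝ᵥ v = 0 := by
      show (R *ᵥ e 1) ⬝ᵥ (-(ρ • (R *ᵥ e 2))) = 0
      rw [dotProduct_neg, dotProduct_smul, h12]; simp
    have h2 : e 2 ⬝ᵥ Ω = 0 := e_dot_21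
    rw [h1, h2]; ring
  · have h1 : (R *ᵥ e 2) ⬝ᵥ v = -ρ := by
      show (R *ᵥ e 2) ⬝ᵥ (-(ρ • (R *ᵥ e 2))) = -ρ
      rw [dotProduct_neg, dotProduct_smul, h22]; simp
    have h2 : e 1 ⬝ᵥ Ω = 1 := e_dot_11
    rw [h1, h2]
    field_simp
    norm_num
end

section
/- Suppose at time t: R(t) ∈ SO(3) with bᵢ = R(t) eᵢ, Ṙ(t) = R(t) Ω̂, ṗ(t) = v(t), m v̇(t) = f b₃ − m g e₃, J Ω̇(t) + Ω × (J Ω) = τ with J = diag(J₁,J₂,J₃), and ρ = ‖p(t)‖ > 0 (no constraints assumed). Then the residual curves are differentiable at t with derivatives: d/dt(e₃ ⋅ v) = (f/m) s₃ − g; d/dt(Ω₃ − v₂/ρ) = ((J₁ − J₂)/J₃) Ω₁ Ω₂ + τ₃/J₃ − (Ω₁ v₃ − Ω₃ v₁ − g s₂)/ρ + v₂ (p̂ ⋅ v)/ρ²; and d/dt(Ω₂ + v₃/ρ) = ((J₃ − J₁)/J₂) Ω₃ Ω₁ + τ₂/J₂ + (Ω₂ v₁ − Ω₁ v₂ + f/m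 − g s₃)/ρ − v₃ (p̂ ⋅ v)/ρ², where Ωᵢ = eᵢ ⋅ Ω, vᵢ = bᵢ ⋅ v, τᵢ = eᵢ ⋅ τ, s₂ = e₃ ⋅ b₂, s₃ = e₃ ⋅ b₃, p̂ = p/ρ. -/
open Matrix

attribute [local instance] Matrix.normedAddCommGroup Matrix.normedSpace

set_option maxHeartbeats 1600000 in
/-- Off-manifold derivatives of the constraint residuals `μ₁ = e₃ ⋅ v`,
`μ₂ = Ω₃ − v₂/ρ`, `μ₃ = Ω₂ + v₃/ρ` along the quadrotor dynamics (no constraints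
assumed), with the explicit formulas of the residual-stabilization construction. -/
theorem residual_derivatives (m g f J₁ J₂ J₃ : ℝ)
    (hm : 0 < m) (hg : 0 < g) (hJ₁ : 0 < J₁) (hJ₂ : 0 < J₂) (hJ₃ : 0 < J₃)
    (R : ℝ → Matrix (Fin 3) (Fin 3) ℝ) (p v Ω : ℝ → Fin 3 → ℝ)
    (v' Ω' τ : Fin 3 → ℝ) (t : ℝ)
    (hSO : SO3 (R t))
    (hR : HasDerivAt R (R t * hat (Ω t)) t)
    (hp : HasDerivAt p (v t) t)
    (hv : HasDerivAt v v' t)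
    (hvdyn : m • v' = f • (R t *ᵥ e 2) - (m * g) • e 2)
    (hΩ : HasDerivAt Ω Ω' t)
    (hΩdyn : (Matrix.diagonal ![J₁, J₂, J₃]) *ᵥ Ω' +
      crossProduct (Ω t) ((Matrix.diagonal ![J₁, J₂, J₃]) *ᵥ Ω t) = τ)
    (hρ : 0 < enorm3 (p t)) :
    HasDerivAt (fun s => e 2 ⬝ᵥ v s)
      ((f / m) * (e 2 ⬝ᵥ (R t *ᵥ e 2)) - g) t ∧
    HasDerivAt (fun s => e 2 ⬝ᵥ Ω s - ((R s *ᵥ e 1) ⬝ᵥ v s) / enorm3 (p s))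
      (((J₁ - J₂) / J₃) * (e 0 ⬝ᵥ Ω t) * (e 1 ⬝ᵥ Ω t) + (e 2 ⬝ᵥ τ) / J₃ -
        ((e 0 ⬝ᵥ Ω t) * ((R t *ᵥ e 2) ⬝ᵥ v t) - (e 2 ⬝ᵥ Ω t) * ((R t *ᵥ e 0) ⬝ᵥ v t) -
            g * (e 2 ⬝ᵥ (R t *ᵥ e 1))) / enorm3 (p t) +
        ((R t *ᵥ e 1) ⬝ᵥ v t) * (((enorm3 (p t))⁻¹ • p t) ⬝ᵥ v t) / (enorm3 (p t)) ^ 2) t ∧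
    HasDerivAt (fun s => e 1 ⬝ᵥ Ω s + ((R s *ᵥ e 2) ⬝ᵥ v s) / enorm3 (p s))
      (((J₃ - J₁) / J₂) * (e 2 ⬝ᵥ Ω t) * (e 0 ⬝ᵥ Ω t) + (e 1 ⬝ᵥ τ) / J₂ +
        ((e 1 ⬝ᵥ Ω t) * ((R t *ᵥ e 0) ⬝ᵥ v t) - (e 0 ⬝ᵥ Ω t) * ((R t *ᵥ e 1) ⬝ᵥ v t) +
            f / m - g * (e 2 ⬝ᵥ (R t *ᵥ e 2))) / enorm3 (p t) -
        ((R t *ᵥ e 2) ⬝ᵥ v t) * (((enorm3 (p t))⁻¹ • p t) ⬝ᵥ v t) / (enorm3 (p t)) ^ 2) t := by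
  obtain ⟨hO, -⟩ := hSO
  have hρne : enorm3 (p t) ≠ 0 := ne_of_gt hρ
  have hmne : m ≠ 0 := ne_of_gt hm
  -- component derivatives
  have hRc : ∀ i j, HasDerivAt (fun s => R s i j) ((R t * hat (Ω t)) i j) t := fun i j =>
    hasDerivAt_pi.mp (hasDerivAt_pi.mp hR i) j
  have hpk : ∀ k, HasDerivAt (fun s => p s k) (v t k) t := fun k => hasDerivAt_pi.mp hp k
  have hvk : ∀ k, HasDerivAt (fun s => v s k) (v' k) t := fun k => hasDerivAt_pi.mp hv k
  have hΩk : ∀ k, HasDerivAt (fun s => Ω s k) (Ω' k) t := fun k => hasDerivAt_pi.mp hΩ k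
  -- orthogonality relations
  have horth : ∀ i j : Fin 3, R t 0 i * R t 0 j + R t 1 i * R t 1 j + R t 2 i * R t 2 j
      = if i = j then 1 else 0 := by
    intro i j
    have h := congrFun (congrFun hO i) j
    simpa [Matrix.mul_apply, Matrix.transpose_apply, Fin.sum_univ_three,
      Matrix.one_apply] using h
  have h02 : R t 0 0 * R t 0 2 + R t 1 0 * R t 1 2 + R t 2 0 * R t 2 2 = 0 := by
    have h := horth 0 2; rwa [if_neg (by decide : ¬((0 : Fin 3) = 2))] at h
  have h12 : R t 0 1 * R t 0 2 + R t 1 1 * R t 1 2 + R t 2 1 * R t 2 2 = 0 := by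
    have h := horth 1 2; rwa [if_neg (by decide : ¬((1 : Fin 3) = 2))] at h
  have h22 : R t 0 2 * R t 0 2 + R t 1 2 * R t 1 2 + R t 2 2 * R t 2 2 = 1 := by
    have h := horth 2 2; rwa [if_pos rfl] at h
  -- translational dynamics, componentwise
  have hvcomp : ∀ k, m * v' k = f * R t k 2 - m * g * e 2 k := by
    intro k
    have h := congrFun hvdyn k
    simpa [mulVec, dotProduct, e, Fin.sum_univ_three, Pi.single_apply] using h
  have hv0 : v' 0 = f / m * R t 0 2 := by
    have h := hvcomp 0; simp [e, Pi.single_apply] at h; field_simp; linear_combination h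
  have hv1 : v' 1 = f / m * R t 1 2 := by
    have h := hvcomp 1; simp [e, Pi.single_apply] at h; field_simp; linear_combination h
  have hv2 : v' 2 = f / m * R t 2 2 - g := by
    have h := hvcomp 2; simp [e, Pi.single_apply] at h; field_simp; linear_combination h
  -- rotational dynamics, componentwise
  have hΩ2 : Ω' 2 = (J₁ - J₂) / J₃ * (Ω t 0 * Ω t 1) + τ 2 / J₃ := by
    have h := congrFun hΩdyn 2
    simp [Matrix.mulVec_diagonal, cross_apply, Pi.add_apply] at h
    field_simp
    linear_combination h
  have hΩ1 : Ω' 1 = (J₃ - J₁) / J₂ * (Ω t 2 * Ω t 0) + τ 1 / J₂ := by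
    have h := congrFun hΩdyn 1
    simp [Matrix.mulVec_diagonal, cross_apply, Pi.add_apply] at h
    field_simp
    linear_combination h
  -- derivative of ρ = enorm3 (p s)
  have hfunρ : (fun s => enorm3 (p s)) = fun s =>
      Real.sqrt (p s 0 * p s 0 + p s 1 * p s 1 + p s 2 * p s 2) := by
    funext s; simp [enorm3, dotProduct, Fin.sum_univ_three]
  have hρt : Real.sqrt (p t 0 * p t 0 + p t 1 * p t 1 + p t 2 * p t 2) = enorm3 (p t) :=
    (congrFun hfunρ t).symm
  have hqt : p t 0 * p t 0 + p t 1 * p t 1 + p t 2 * p t 2 ≠ 0 := by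
    intro h0
    rw [← hρt, h0, Real.sqrt_zero] at hρ
    exact lt_irrefl 0 hρ
  have hq : HasDerivAt (fun s => p s 0 * p s 0 + p s 1 * p s 1 + p s 2 * p s 2)
      (v t 0 * p t 0 + p t 0 * v t 0 + (v t 1 * p t 1 + p t 1 * v t 1) +
        (v t 2 * p t 2 + p t 2 * v t 2)) t :=
    (((hpk 0).mul (hpk 0)).add ((hpk 1).mul (hpk 1))).add ((hpk 2).mul (hpk 2))
  have hρ' : HasDerivAt (fun s => enorm3 (p s))
      ((p t 0 * v t 0 + p t 1 * v t 1 + p t 2 * v t 2) / enorm3 (p t)) t := by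
    rw [hfunρ]
    have := hq.sqrt hqt
    rw [hρt] at this
    convert this using 1
    field_simp
    ring
  -- first residual
  have goal1 : HasDerivAt (fun s => e 2 ⬝ᵥ v s)
      ((f / m) * (e 2 ⬝ᵥ (R t *ᵥ e 2)) - g) t := by
    have hfun1 : (fun s => e 2 ⬝ᵥ v s) = fun s => v s 2 := by
      funext s; simp [e, dotProduct, Fin.sum_univ_three, Pi.single_apply]
    rw [hfun1]
    convert hvk 2 using 1
    rw [hv2]
    simp [e, mulVec, dotProduct, Fin.sum_univ_three, Pi.single_apply]
  -- second residual
  have hN2 : HasDerivAt (fun s => R s 0 1 * v s 0 + R s 1 1 * v s 1 + R s 2 1 * v s 2)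
      (Ω t 0 * (R t 0 2 * v t 0 + R t 1 2 * v t 1 + R t 2 2 * v t 2)
        - Ω t 2 * (R t 0 0 * v t 0 + R t 1 0 * v t 1 + R t 2 0 * v t 2)
        - g * R t 2 1) t := by
    have h := (((hRc 0 1).mul (hvk 0)).add ((hRc 1 1).mul (hvk 1))).add
      (((hRc 2 1).mul (hvk 2)))
    refine h.congr_deriv (Eq.symm ?_)
    simp only [Matrix.mul_apply, hat, Fin.sum_univ_three]
    rw [hv0, hv1, hv2]
    simp
    linear_combination (-(f / m)) * h12
  have hμ2 := (hΩk 2).sub (hN2.div hρ' hρne)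
  have goal2 : HasDerivAt (fun s => e 2 ⬝ᵥ Ω s - ((R s *ᵥ e 1) ⬝ᵥ v s) / enorm3 (p s))
      (((J₁ - J₂) / J₃) * (e 0 ⬝ᵥ Ω t) * (e 1 ⬝ᵥ Ω t) + (e 2 ⬝ᵥ τ) / J₃ -
        ((e 0 ⬝ᵥ Ω t) * ((R t *ᵥ e 2) ⬝ᵥ v t) - (e 2 ⬝ᵥ Ω t) * ((R t *ᵥ e 0) ⬝ᵥ v t) -
            g * (e 2 ⬝ᵥ (R t *ᵥ e 1))) / enorm3 (p t) +
        ((R t *ᵥ e 1) ⬝ᵥ v t) * (((enorm3 (p t))⁻¹ • p t) ⬝ᵥ v t) / (enorm3 (p t)) ^ 2) t := by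
    have hfun2 : (fun s => e 2 ⬝ᵥ Ω s - ((R s *ᵥ e 1) ⬝ᵥ v s) / enorm3 (p s))
        = fun s => Ω s 2 -
          (R s 0 1 * v s 0 + R s 1 1 * v s 1 + R s 2 1 * v s 2) / enorm3 (p s) := by
      funext s; simp [e, mulVec, dotProduct, Fin.sum_univ_three, Pi.single_apply]
    rw [hfun2]
    refine hμ2.congr_deriv (Eq.symm ?_)
    rw [hΩ2]
    simp [e, mulVec, dotProduct, Fin.sum_univ_three, Pi.single_apply, Pi.smul_apply,
      smul_eq_mul]
    field_simp
    ring
  -- third residual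
  have hN3 : HasDerivAt (fun s => R s 0 2 * v s 0 + R s 1 2 * v s 1 + R s 2 2 * v s 2)
      (Ω t 1 * (R t 0 0 * v t 0 + R t 1 0 * v t 1 + R t 2 0 * v t 2)
        - Ω t 0 * (R t 0 1 * v t 0 + R t 1 1 * v t 1 + R t 2 1 * v t 2)
        + f / m - g * R t 2 2) t := by
    have h := (((hRc 0 2).mul (hvk 0)).add ((hRc 1 2).mul (hvk 1))).add
      (((hRc 2 2).mul (hvk 2)))
    refine h.congr_deriv (Eq.symm ?_)
    simp only [Matrix.mul_apply, hat, Fin.sum_univ_three]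
    rw [hv0, hv1, hv2]
    simp
    linear_combination (-(f / m)) * h22
  have hμ3 := (hΩk 1).add (hN3.div hρ' hρne)
  have goal3 : HasDerivAt (fun s => e 1 ⬝ᵥ Ω s + ((R s *ᵥ e 2) ⬝ᵥ v s) / enorm3 (p s))
      (((J₃ - J₁) / J₂) * (e 2 ⬝ᵥ Ω t) * (e 0 ⬝ᵥ Ω t) + (e 1 ⬝ᵥ τ) / J₂ +
        ((e 1 ⬝ᵥ Ω t) * ((R t *ᵥ e 0) ⬝ᵥ v t) - (e 0 ⬝ᵥ Ω t) * ((R t *ᵥ e 1) ⬝ᵥ v t) +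
            f / m - g * (e 2 ⬝ᵥ (R t *ᵥ e 2))) / enorm3 (p t) -
        ((R t *ᵥ e 2) ⬝ᵥ v t) * (((enorm3 (p t))⁻¹ • p t) ⬝ᵥ v t) / (enorm3 (p t)) ^ 2) t := by
    have hfun3 : (fun s => e 1 ⬝ᵥ Ω s + ((R s *ᵥ e 2) ⬝ᵥ v s) / enorm3 (p s))
        = fun s => Ω s 1 +
          (R s 0 2 * v s 0 + R s 1 2 * v s 1 + R s 2 2 * v s 2) / enorm3 (p s) := by
      funext s; simp [e, mulVec, dotProduct, Fin.sum_univ_three, Pi.single_apply]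
    rw [hfun3]
    refine hμ3.congr_deriv (Eq.symm ?_)
    rw [hΩ1]
    simp [e, mulVec, dotProduct, Fin.sum_univ_three, Pi.single_apply, Pi.smul_apply,
      smul_eq_mul]
    field_simp
    ring
  exact ⟨goal1, goal2, goal3⟩
end

section
/- (Residual stabilization proposition.) Let m, g, J₁, J₂, J₃ > 0, J = diag(J₁,J₂,J₃), k₁, k₂, k₃ > 0, and let p, v, Ω : I → ℝ³, R : I → SO(3) be differentiable curves on an interval I containing 0 satisfying the closed-loop dynamics ṗ = v, m v̇ = f R e₃ − m g e₃, Ṙ = R Ω̂, J Ω̇ + Ω × (J Ω) = τ with τ₁ = 0 and the stabilizing feedback f = m (g − k₁ μ₁)/s₃, τ₂ = J₂[−k₃ μ₃ − ((J₃ − J₁)/J₂) Ω₃ Ω₁ − (Ω₂ v₁ − Ω₁ v₂ + f/m − g s₃)/ρ + v₃ (p̂ ⋅ v)/ρ²], τ₃ = J₃[−k₂ μ₂ − ((J₁ − J₂)/J₃) Ω₁ Ω₂ + (Ω₁ v₃ − Ω₃ v₁ − g s₂)/ρ − v₂ (p̂ ⋅ v)/ρ²], where the residuals are μ₁ = e₃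 ⋅ v, μ₂ = Ω₃ − v₂/ρ, μ₃ = Ω₂ + v₃/ρ. Assume ρ(t) = ‖p(t)‖ > 0 and s₃(t) = e₃ ⋅ b₃(t) ≠ 0 for all t ∈ I. Then μ̇ᵢ(t) = −kᵢ μᵢ(t) for all t ∈ I, and consequently μᵢ(t) = μᵢ(0) e^{−kᵢ t} for all t ∈ I and i = 1, 2, 3. -/
open Matrix

/-- Residual `μ₁ = e₃ ⋅ v` (altitude). -/
noncomputable def mu1 (v : ℝ → Fin 3 → ℝ) (s : ℝ) : ℝ := e 2 ⬝ᵥ v s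

/-- Residual `μ₂ = Ω₃ − v₂/ρ` (pointing). -/
noncomputable def mu2 (R : ℝ → Matrix (Fin 3) (Fin 3) ℝ) (p v Ω : ℝ → Fin 3 → ℝ)
    (s : ℝ) : ℝ := e 2 ⬝ᵥ Ω s - ((R s *ᵥ e 1) ⬝ᵥ v s) / enorm3 (p s)

/-- Residual `μ₃ = Ω₂ + v₃/ρ` (pointing). -/
noncomputable def mu3 (R : ℝ → Matrix (Fin 3) (Fin 3) ℝ) (p v Ω : ℝ → Fin 3 → ℝ)
    (s : ℝ) : ℝ := e 1 ⬝ᵥ Ω s + ((R s *ᵥ e 2) ⬝ᵥ v s) / enorm3 (p s)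

attribute [local instance] Matrix.normedAddCommGroup Matrix.normedSpace

lemma edot (i : Fin 3) (x : Fin 3 → ℝ) : e i ⬝ᵥ x = x i := by
  simp [e, dotProduct, Pi.single_apply]

lemma mulVec_e_apply (R : Matrix (Fin 3) (Fin 3) ℝ) (i a : Fin 3) : (R *ᵥ e i) a = R a i := by
  simp [e, Matrix.mulVec_single]

lemma mul_hat_1 (R : Matrix (Fin 3) (Fin 3) ℝ) (Ω : Fin 3 → ℝ) (a : Fin 3) :
    (R * hat Ω) a 1 = -(Ω 2) * R a 0 + Ω 0 * R a 2 := by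
  simp [hat, Matrix.mul_apply, Fin.sum_univ_three]; ring

lemma mul_hat_2 (R : Matrix (Fin 3) (Fin 3) ℝ) (Ω : Fin 3 → ℝ) (a : Fin 3) :
    (R * hat Ω) a 2 = Ω 1 * R a 0 + -(Ω 0) * R a 1 := by
  simp [hat, Matrix.mul_apply, Fin.sum_univ_three]; ring

lemma exp_decay {I : Set ℝ} (hI : I.OrdConnected) (h0 : (0:ℝ) ∈ I) (k : ℝ) (μ : ℝ → ℝ)
    (hμ : ∀ t ∈ I, HasDerivAt μ (-(k * μ t)) t) :
    ∀ t ∈ I, μ t = μ 0 * Real.exp (-(k * t)) := by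
  intro t ht
  set h : ℝ → ℝ := fun s => μ s * Real.exp (k * s) with hh
  have hd : ∀ s ∈ I, HasDerivWithinAt h ((fun _ => (0:ℝ)) s) I s := by
    intro s hs
    have he : HasDerivAt (fun s : ℝ => Real.exp (k * s)) (Real.exp (k * s) * k) s := by
      exact ((Real.hasDerivAt_exp (k * s)).comp s ((hasDerivAt_id s).const_mul k)).congr_deriv (by simp)
    have hmul : HasDerivAt h (-(k * μ s) * Real.exp (k * s) + μ s * (Real.exp (k * s) * k)) s :=
      (hμ s hs).mul he
    have h0' : (-(k * μ s) * Real.exp (k * s) + μ s * (Real.exp (k * s) * k)) = 0 := by ring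
    rw [h0'] at hmul
    exact hmul.hasDerivWithinAt
  have hconv : Convex ℝ I := convex_iff_ordConnected.mpr hI
  have hb := Convex.norm_image_sub_le_of_norm_hasDerivWithin_le (C := 0)
    hd (fun x _ => by simp) hconv h0 ht
  simp only [Real.norm_eq_abs, zero_mul] at hb
  have heq : μ t * Real.exp (k * t) = μ 0 * Real.exp (k * 0) := by
    have h1 := abs_nonpos_iff.mp hb
    have h2 := sub_eq_zero.mp h1
    simpa [hh] using h2
  have heq2 : μ t * Real.exp (k * t) = μ 0 := by simpa using heq
  rw [← heq2, Real.exp_neg, mul_assoc, mul_inv_cancel₀ (Real.exp_ne_zero _), mul_one]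

/-- Residual stabilization: under the closed-loop dynamics with the stabilizing feedback
(`τ₁ = 0`, `f = m(g − k₁μ₁)/s₃` and the given `τ₂, τ₃`), the residuals satisfy
`μ̇ᵢ = −kᵢ μᵢ` on `I` and hence `μᵢ(t) = μᵢ(0) e^{−kᵢ t}` for all `t ∈ I`. -/
theorem residual_stabilization (m g J₁ J₂ J₃ k₁ k₂ k₃ : ℝ)
    (hm : 0 < m) (hg : 0 < g) (hJ₁ : 0 < J₁) (hJ₂ : 0 < J₂) (hJ₃ : 0 < J₃)
    (hk₁ : 0 < k₁) (hk₂ : 0 < k₂) (hk₃ : 0 < k₃)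
    (I : Set ℝ) (hI : I.OrdConnected) (h0 : (0 : ℝ) ∈ I)
    (p v v' Ω Ω' τ : ℝ → Fin 3 → ℝ) (R : ℝ → Matrix (Fin 3) (Fin 3) ℝ) (f : ℝ → ℝ)
    (hSO : ∀ t ∈ I, SO3 (R t))
    (hρpos : ∀ t ∈ I, 0 < enorm3 (p t))
    (hs3 : ∀ t ∈ I, e 2 ⬝ᵥ (R t *ᵥ e 2) ≠ 0)
    -- translational dynamics
    (hp : ∀ t ∈ I, HasDerivAt p (v t) t)
    (hv : ∀ t ∈ I, HasDerivAt v (v' t) t)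
    (hvdyn : ∀ t ∈ I, m • v' t = f t • (R t *ᵥ e 2) - (m * g) • e 2)
    -- rotational dynamics
    (hR : ∀ t ∈ I, HasDerivAt R (R t * hat (Ω t)) t)
    (hΩ : ∀ t ∈ I, HasDerivAt Ω (Ω' t) t)
    (hΩdyn : ∀ t ∈ I,
      (Matrix.diagonal ![J₁, J₂, J₃]) *ᵥ Ω' t +
        crossProduct (Ω t) ((Matrix.diagonal ![J₁, J₂, J₃]) *ᵥ Ω t) = τ t)
    -- stabilizing feedback
    (hf : ∀ t ∈ I, f t = m * (g - k₁ * mu1 v t) / (e 2 ⬝ᵥ (R t *ᵥ e 2)))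
    (hτ1 : ∀ t ∈ I, e 0 ⬝ᵥ τ t = 0)
    (hτ2 : ∀ t ∈ I, e 1 ⬝ᵥ τ t =
      J₂ * (-(k₃ * mu3 R p v Ω t) -
        ((J₃ - J₁) / J₂) * (e 2 ⬝ᵥ Ω t) * (e 0 ⬝ᵥ Ω t) -
        ((e 1 ⬝ᵥ Ω t) * ((R t *ᵥ e 0) ⬝ᵥ v t) - (e 0 ⬝ᵥ Ω t) * ((R t *ᵥ e 1) ⬝ᵥ v t) +
          f t / m - g * (e 2 ⬝ᵥ (R t *ᵥ e 2))) / enorm3 (p t) +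
        ((R t *ᵥ e 2) ⬝ᵥ v t) * (((enorm3 (p t))⁻¹ • p t) ⬝ᵥ v t) / (enorm3 (p t)) ^ 2))
    (hτ3 : ∀ t ∈ I, e 2 ⬝ᵥ τ t =
      J₃ * (-(k₂ * mu2 R p v Ω t) -
        ((J₁ - J₂) / J₃) * (e 0 ⬝ᵥ Ω t) * (e 1 ⬝ᵥ Ω t) +
        ((e 0 ⬝ᵥ Ω t) * ((R t *ᵥ e 2) ⬝ᵥ v t) - (e 2 ⬝ᵥ Ω t) * ((R t *ᵥ e 0) ⬝ᵥ v t) -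
          g * (e 2 ⬝ᵥ (R t *ᵥ e 1))) / enorm3 (p t) -
        ((R t *ᵥ e 1) ⬝ᵥ v t) * (((enorm3 (p t))⁻¹ • p t) ⬝ᵥ v t) / (enorm3 (p t)) ^ 2)) :
    ∀ t ∈ I,
      (HasDerivAt (mu1 v) (-(k₁ * mu1 v t)) t ∧
        HasDerivAt (mu2 R p v Ω) (-(k₂ * mu2 R p v Ω t)) t ∧
        HasDerivAt (mu3 R p v Ω) (-(k₃ * mu3 R p v Ω t)) t) ∧
      (mu1 v t = mu1 v 0 * Real.exp (-(k₁ * t)) ∧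
        mu2 R p v Ω t = mu2 R p v Ω 0 * Real.exp (-(k₂ * t)) ∧
        mu3 R p v Ω t = mu3 R p v Ω 0 * Real.exp (-(k₃ * t))) := by

  have hmu1fun : mu1 v = fun s => v s 2 := by
    funext s; simp [mu1, edot, e, Pi.single_apply]
  have hmu2fun : mu2 R p v Ω = fun s =>
      Ω s 2 - (R s 0 1 * v s 0 + R s 1 1 * v s 1 + R s 2 1 * v s 2) / enorm3 (p s) := by
    funext s
    simp [mu2, edot, dotProduct, Fin.sum_univ_three, mulVec_e_apply, e, Pi.single_apply]
  have hmu3fun : mu3 R p v Ω = fun s =>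
      Ω s 1 + (R s 0 2 * v s 0 + R s 1 2 * v s 1 + R s 2 2 * v s 2) / enorm3 (p s) := by
    funext s
    simp [mu3, edot, dotProduct, Fin.sum_univ_three, mulVec_e_apply, e, Pi.single_apply]
  have key : ∀ t ∈ I,
      HasDerivAt (mu1 v) (-(k₁ * mu1 v t)) t ∧
      HasDerivAt (mu2 R p v Ω) (-(k₂ * mu2 R p v Ω t)) t ∧
      HasDerivAt (mu3 R p v Ω) (-(k₃ * mu3 R p v Ω t)) t := by
    intro t ht
    have hρ := hρpos t ht
    have hρne : enorm3 (p t) ≠ 0 := ne_of_gt hρ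
    have hvc : ∀ i, HasDerivAt (fun s => v s i) (v' t i) t := hasDerivAt_pi.mp (hv t ht)
    have hΩc : ∀ i, HasDerivAt (fun s => Ω s i) (Ω' t i) t := hasDerivAt_pi.mp (hΩ t ht)
    have hpc : ∀ i, HasDerivAt (fun s => p s i) (v t i) t := hasDerivAt_pi.mp (hp t ht)
    have hRc : ∀ a b, HasDerivAt (fun s => R s a b) ((R t * hat (Ω t)) a b) t := fun a b =>
      hasDerivAt_pi.mp (hasDerivAt_pi.mp (hR t ht) a) b
    have hv'0 : m * v' t 0 = f t * R t 0 2 := by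
      have h := congr_fun (hvdyn t ht) 0
      simpa [mulVec_e_apply, e, Pi.single_apply] using h
    have hv'1 : m * v' t 1 = f t * R t 1 2 := by
      have h := congr_fun (hvdyn t ht) 1
      simpa [mulVec_e_apply, e, Pi.single_apply] using h
    have hv'2 : m * v' t 2 = f t * R t 2 2 - m * g := by
      have h := congr_fun (hvdyn t ht) 2
      simpa [mulVec_e_apply, e, Pi.single_apply] using h
    have horth : R t 0 1 * R t 0 2 + R t 1 1 * R t 1 2 + R t 2 1 * R t 2 2 = 0 := by
      have h := congr_fun (congr_fun (hSO t ht).1 1) 2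
      simpa [Matrix.mul_apply, Matrix.transpose_apply, Fin.sum_univ_three,
        Matrix.one_apply] using h
    have hnorm : R t 0 2 * R t 0 2 + R t 1 2 * R t 1 2 + R t 2 2 * R t 2 2 = 1 := by
      have h := congr_fun (congr_fun (hSO t ht).1 2) 2
      simpa [Matrix.mul_apply, Matrix.transpose_apply, Fin.sum_univ_three,
        Matrix.one_apply] using h
    have hqpos : 0 < p t 0 * p t 0 + p t 1 * p t 1 + p t 2 * p t 2 := by
      have h1 : (0:ℝ) < Real.sqrt (p t ⬝ᵥ p t) := hρ
      have h2 := Real.sqrt_pos.mp h1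
      simpa [dotProduct, Fin.sum_univ_three] using h2
    have hρfun : (fun s => enorm3 (p s)) =
        fun s => Real.sqrt (p s 0 * p s 0 + p s 1 * p s 1 + p s 2 * p s 2) := by
      funext s; simp [enorm3, dotProduct, Fin.sum_univ_three]
    have hsq : Real.sqrt (p t 0 * p t 0 + p t 1 * p t 1 + p t 2 * p t 2) = enorm3 (p t) := by
      simp [enorm3, dotProduct, Fin.sum_univ_three]
    have hρd : HasDerivAt (fun s => enorm3 (p s))
        ((p t 0 * v t 0 + p t 1 * v t 1 + p t 2 * v t 2) / enorm3 (p t)) t := by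
      rw [hρfun]
      have hq : HasDerivAt (fun s => p s 0 * p s 0 + p s 1 * p s 1 + p s 2 * p s 2)
          (v t 0 * p t 0 + p t 0 * v t 0 + (v t 1 * p t 1 + p t 1 * v t 1) +
            (v t 2 * p t 2 + p t 2 * v t 2)) t :=
        (((hpc 0).mul (hpc 0)).add ((hpc 1).mul (hpc 1))).add ((hpc 2).mul (hpc 2))
      have hc := (Real.hasDerivAt_sqrt hqpos.ne').comp t hq
      refine hc.congr_deriv ?_
      symm
      rw [hsq]
      field_simp
      ring
    -- μ₁
    have hmu1d : HasDerivAt (mu1 v) (-(k₁ * mu1 v t)) t := by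
      have hs := hs3 t ht
      rw [edot, mulVec_e_apply] at hs
      have hft := hf t ht
      rw [edot, mulVec_e_apply] at hft
      simp only [mu1, edot] at hft
      have hft' : f t * R t 2 2 = m * (g - k₁ * v t 2) := by
        field_simp [hs] at hft
        linear_combination hft
      have hval : v' t 2 = -(k₁ * v t 2) :=
        mul_left_cancel₀ (ne_of_gt hm) (by linear_combination hv'2 + hft')
      rw [hmu1fun]
      exact hval ▸ hvc 2
    -- μ₂
    have hmu2d : HasDerivAt (mu2 R p v Ω) (-(k₂ * mu2 R p v Ω t)) t := by
      have hdyn2 : J₃ * Ω' t 2 + (Ω t 0 * (J₂ * Ω t 1) - Ω t 1 * (J₁ * Ω t 0)) = τ t 2 := by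
        have h := congr_fun (hΩdyn t ht) 2
        simp only [Pi.add_apply, Matrix.mulVec_diagonal] at h
        simp [crossProduct, Matrix.mulVec_diagonal] at h
        linear_combination h
      have hΩ'2val : Ω' t 2 =
          (τ t 2 - (Ω t 0 * (J₂ * Ω t 1) - Ω t 1 * (J₁ * Ω t 0))) / J₃ := by
        field_simp
        linear_combination hdyn2
      have hτc := hτ3 t ht
      simp [mu2, e, Pi.single_apply, dotProduct, Fin.sum_univ_three, mulVec_e_apply,
        Pi.smul_apply, smul_eq_mul] at hτc
      have hsum : R t 0 1 * v' t 0 + R t 1 1 * v' t 1 + R t 2 1 * v' t 2 = -(g * R t 2 1) :=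
        mul_left_cancel₀ (ne_of_gt hm)
          (by linear_combination R t 0 1 * hv'0 + R t 1 1 * hv'1 + R t 2 1 * hv'2 + f t * horth)
      have hAd : HasDerivAt (fun s => R s 0 1 * v s 0 + R s 1 1 * v s 1 + R s 2 1 * v s 2)
          (-(Ω t 2) * (R t 0 0 * v t 0 + R t 1 0 * v t 1 + R t 2 0 * v t 2) +
            Ω t 0 * (R t 0 2 * v t 0 + R t 1 2 * v t 1 + R t 2 2 * v t 2) -
            g * R t 2 1) t := by
        have hd := (((hRc 0 1).mul (hvc 0)).add ((hRc 1 1).mul (hvc 1))).add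
          ((hRc 2 1).mul (hvc 2))
        refine hd.congr_deriv ?_
        symm
        simp only [mul_hat_1]
        linear_combination -hsum
      rw [hmu2fun]
      have hfull := (hΩc 2).sub (hAd.div hρd hρne)
      refine hfull.congr_deriv ?_
      symm
      simp [mu2, e, Pi.single_apply, dotProduct, Fin.sum_univ_three, mulVec_e_apply]
      rw [hΩ'2val, hτc]
      field_simp [hρne, ne_of_gt hJ₃]
      ring
    -- μ₃
    have hmu3d : HasDerivAt (mu3 R p v Ω) (-(k₃ * mu3 R p v Ω t)) t := by
      have hdyn1 : J₂ * Ω' t 1 + (Ω t 2 * (J₁ * Ω t 0) - Ω t 0 * (J₃ * Ω t 2)) = τ t 1 := by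
        have h := congr_fun (hΩdyn t ht) 1
        simp only [Pi.add_apply, Matrix.mulVec_diagonal] at h
        simp [crossProduct, Matrix.mulVec_diagonal] at h
        linear_combination h
      have hΩ'1val : Ω' t 1 =
          (τ t 1 - (Ω t 2 * (J₁ * Ω t 0) - Ω t 0 * (J₃ * Ω t 2))) / J₂ := by
        field_simp
        linear_combination hdyn1
      have hτc := hτ2 t ht
      simp [mu3, e, Pi.single_apply, dotProduct, Fin.sum_univ_three, mulVec_e_apply,
        Pi.smul_apply, smul_eq_mul] at hτc
      have hsum3 : R t 0 2 * v' t 0 + R t 1 2 * v' t 1 + R t 2 2 * v' t 2 =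
          (f t - m * g * R t 2 2) / m := by
        rw [eq_div_iff (ne_of_gt hm)]
        linear_combination R t 0 2 * hv'0 + R t 1 2 * hv'1 + R t 2 2 * hv'2 + f t * hnorm
      have hAd : HasDerivAt (fun s => R s 0 2 * v s 0 + R s 1 2 * v s 1 + R s 2 2 * v s 2)
          (Ω t 1 * (R t 0 0 * v t 0 + R t 1 0 * v t 1 + R t 2 0 * v t 2) +
            -(Ω t 0) * (R t 0 1 * v t 0 + R t 1 1 * v t 1 + R t 2 1 * v t 2) +
            (R t 0 2 * v' t 0 + R t 1 2 * v' t 1 + R t 2 2 * v' t 2)) t := by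
        have hd := (((hRc 0 2).mul (hvc 0)).add ((hRc 1 2).mul (hvc 1))).add
          ((hRc 2 2).mul (hvc 2))
        refine hd.congr_deriv ?_
        symm
        simp only [mul_hat_2]
        ring
      rw [hmu3fun]
      have hfull := (hΩc 1).add (hAd.div hρd hρne)
      refine hfull.congr_deriv ?_
      symm
      simp [mu3, e, Pi.single_apply, dotProduct, Fin.sum_univ_three, mulVec_e_apply]
      rw [hsum3, hΩ'1val, hτc]
      field_simp [hρne, ne_of_gt hJ₂, ne_of_gt hm]
      ring
    exact ⟨hmu1d, hmu2d, hmu3d⟩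
  intro t ht
  exact ⟨key t ht,
    exp_decay hI h0 k₁ (mu1 v) (fun s hs => (key s hs).1) t ht,
    exp_decay hI h0 k₂ (mu2 R p v Ω) (fun s hs => (key s hs).2.1) t ht,
    exp_decay hI h0 k₃ (mu3 R p v Ω) (fun s hs => (key s hs).2.2) t ht⟩
end
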